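/- Let (X, 𝔄) be a measurable space, μ a probability measure on X, d ≥ 1, and f : X → ℝ^d a bounded measurable map. Suppose there is a measurable set S ⊆ X with μ(S) > 0 such that for every x ∈ S the function x' ↦ ⟨f(x), f(x')⟩ is not μ-almost-everywhere equal to a constant. Then ∫_X ∫_X ⟨f(x), f(x')⟩ dμ(x') dμ(x) < ∫_X log( ∫_X exp(⟨f(x), f(x')⟩) dμ(x') ) dμ(x); that is, the limit additional risk of InfoNCE, lim_{K→∞}(I_K − log K), is strictly positive and depends on f, so the InfoNCE loss does not satisfy the robust condition (its additional risk is not constant in f). -/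

import Mathlib

open MeasureTheory

/-- InfoNCE is non-robust: if on a set S of positive measure of anchors x the
similarity x' ↦ ⟨f(x),f(x')⟩ is not μ-a.e. constant, then the limit additional risk of
InfoNCE is strictly positive:
∫∫⟨f(x),f(x')⟩ dμdμ < ∫ log ∫ e^{⟨f(x),f(x')⟩} dμ dμ. -/
theorem infoNCE_limit_additional_risk_pos
    {X : Type*} [MeasurableSpace X] (μ : Measure X) [IsProbabilityMeasure μ]
    (d : ℕ) (hd : 1 ≤ d)
    (f : X → EuclideanSpace ℝ (Fin d)) (hf : Measurable f)
    (B : ℝ) (hB : ∀ x, ‖f x‖ ≤ B)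
    (S : Set X) (hS : MeasurableSet S) (hSpos : 0 < μ S)
    (hnonconst : ∀ x ∈ S, ∀ c : ℝ,
      ¬ ((fun x' => (inner ℝ (f x) (f x') : ℝ)) =ᵐ[μ] fun _ => c)) :
    (∫ x, ∫ x', (inner ℝ (f x) (f x') : ℝ) ∂μ ∂μ)
      < ∫ x, Real.log (∫ x', Real.exp ((inner ℝ (f x) (f x') : ℝ)) ∂μ) ∂μ := by
  classical
  obtain ⟨x₀⟩ : Nonempty X := by
    rcases MeasureTheory.nonempty_of_measure_ne_zero hSpos.ne' with ⟨x, _⟩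
    exact ⟨x⟩
  have hB0 : 0 ≤ B := le_trans (norm_nonneg (f x₀)) (hB x₀)
  set M : ℝ := B * B with hM
  have hM0 : 0 ≤ M := mul_nonneg hB0 hB0
  -- pointwise bound on the inner products
  have hbound : ∀ x x', |(inner ℝ (f x) (f x') : ℝ)| ≤ M := by
    intro x x'
    calc |(inner ℝ (f x) (f x') : ℝ)| ≤ ‖f x‖ * ‖f x'‖ := abs_real_inner_le_norm _ _
      _ ≤ B * B := mul_le_mul (hB x) (hB x') (norm_nonneg _) hB0
  -- measurability of the similarity in the second variable
  have humeas : ∀ x, Measurable fun x' => (inner ℝ (f x) (f x') : ℝ) := fun x =>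
    (measurable_const (a := f x)).inner hf
  have hui : ∀ x, Integrable (fun x' => (inner ℝ (f x) (f x') : ℝ)) μ := by
    intro x
    refine (integrable_const M).mono' (humeas x).aestronglyMeasurable ?_
    exact Filter.Eventually.of_forall fun x' => by
      simpa [Real.norm_eq_abs] using hbound x x'
  have huei : ∀ x, Integrable (fun x' => Real.exp (inner ℝ (f x) (f x') : ℝ)) μ := by
    intro x
    refine (integrable_const (Real.exp M)).mono'
      ((Real.measurable_exp.comp (humeas x)).aestronglyMeasurable) ?_
    refine Filter.Eventually.of_forall fun x' => ?_
    rw [Real.norm_eq_abs, Real.abs_exp]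
    exact Real.exp_le_exp.2 ((le_abs_self _).trans (hbound x x'))
  -- Jensen for each x (non-strict everywhere, strict on S)
  have hjensen : ∀ x, Real.exp (∫ x', (inner ℝ (f x) (f x') : ℝ) ∂μ)
      ≤ ∫ x', Real.exp (inner ℝ (f x) (f x') : ℝ) ∂μ := by
    intro x
    have := convexOn_exp.map_average_le Real.continuous_exp.continuousOn isClosed_univ
      (Filter.Eventually.of_forall fun x' => Set.mem_univ _) (hui x) ((huei x).congr ?_)
    · simpa [average_eq_integral] using this
    · rfl
  have hjensen' : ∀ x ∈ S, Real.exp (∫ x', (inner ℝ (f x) (f x') : ℝ) ∂μ)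
      < ∫ x', Real.exp (inner ℝ (f x) (f x') : ℝ) ∂μ := by
    intro x hx
    rcases strictConvexOn_exp.ae_eq_const_or_map_average_lt
      Real.continuous_exp.continuousOn isClosed_univ
      (Filter.Eventually.of_forall fun x' => Set.mem_univ _) (hui x)
      ((huei x).congr (by rfl)) with h | h
    · exact absurd h (hnonconst x hx _)
    · simpa [average_eq_integral] using h
  -- exponential integral is positive
  have hexppos : ∀ x, 0 < ∫ x', Real.exp (inner ℝ (f x) (f x') : ℝ) ∂μ := fun x =>
    lt_of_lt_of_le (Real.exp_pos _) (hjensen x)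
  -- define g and h
  set g : X → ℝ := fun x => ∫ x', (inner ℝ (f x) (f x') : ℝ) ∂μ with hg
  set h : X → ℝ := fun x => Real.log (∫ x', Real.exp (inner ℝ (f x) (f x') : ℝ) ∂μ) with hh
  have hgle : ∀ x, g x ≤ h x := by
    intro x
    have := Real.log_le_log (Real.exp_pos _) (hjensen x)
    simpa [Real.log_exp] using this
  have hglt : ∀ x ∈ S, g x < h x := by
    intro x hx
    have := Real.log_lt_log (Real.exp_pos _) (hjensen' x hx)
    simpa [Real.log_exp] using this
  -- measurability of g and h
  have hFmeas : Measurable fun p : X × X => (inner ℝ (f p.1) (f p.2) : ℝ) :=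
    (hf.comp measurable_fst).inner (hf.comp measurable_snd)
  have hgmeas : StronglyMeasurable g :=
    hFmeas.stronglyMeasurable.integral_prod_right'
  have hhmeas : StronglyMeasurable h := by
    have : Measurable fun p : X × X => Real.exp (inner ℝ (f p.1) (f p.2) : ℝ) :=
      Real.measurable_exp.comp hFmeas
    exact (Real.measurable_log.comp
      this.stronglyMeasurable.integral_prod_right'.measurable).stronglyMeasurable
  -- bounds on g and h
  have hgb : ∀ x, |g x| ≤ M := by
    intro x
    have := norm_integral_le_of_norm_le_const
      (C := M) (μ := μ) (f := fun x' => (inner ℝ (f x) (f x') : ℝ))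
      (Filter.Eventually.of_forall fun x' => by
        simpa [Real.norm_eq_abs] using hbound x x')
    simpa [Real.norm_eq_abs] using this
  have hhb : ∀ x, |h x| ≤ M := by
    intro x
    rw [abs_le]
    constructor
    · have h1 : Real.exp (-M) ≤ ∫ x', Real.exp (inner ℝ (f x) (f x') : ℝ) ∂μ := by
        refine le_trans ?_ (hjensen x)
        exact Real.exp_le_exp.2 (by
          have := hgb x
          rw [abs_le] at this
          linarith [this.1])
      have := Real.log_le_log (Real.exp_pos _) h1
      simpa [Real.log_exp] using this
    · have h2 : ∫ x', Real.exp (inner ℝ (f x) (f x') : ℝ) ∂μ ≤ Real.exp M := by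
        calc ∫ x', Real.exp (inner ℝ (f x) (f x') : ℝ) ∂μ
            ≤ ∫ _x', Real.exp M ∂μ := by
              refine integral_mono (huei x) (integrable_const _) fun x' =>
                Real.exp_le_exp.2 ((le_abs_self _).trans (hbound x x'))
          _ = Real.exp M := by simp
      have := Real.log_le_log (hexppos x) h2
      simpa [Real.log_exp] using this
  have hgi : Integrable g μ := by
    refine (integrable_const M).mono' hgmeas.aestronglyMeasurable ?_
    exact Filter.Eventually.of_forall fun x => by simpa [Real.norm_eq_abs] using hgb x
  have hhi : Integrable h μ := by
    refine (integrable_const M).mono' hhmeas.aestronglyMeasurable ?_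
    exact Filter.Eventually.of_forall fun x => by simpa [Real.norm_eq_abs] using hhb x
  -- conclude
  have hdiff : 0 < ∫ x, (h x - g x) ∂μ := by
    rw [integral_pos_iff_support_of_nonneg
      (fun x => sub_nonneg.2 (hgle x)) (hhi.sub hgi)]
    refine lt_of_lt_of_le hSpos (measure_mono fun x hx => ?_)
    exact ne_of_gt (sub_pos.2 (hglt x hx))
  have := hdiff
  rw [integral_sub hhi hgi] at this
  linarith
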